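/- For all integers k ≥ 0, 0 ≤ i ≤ k, and j ≥ 0, the number of directed paths D_k(i,j) satisfies D_k(i,j) = (2/(k+2)) · Σ_{r=1}^{k+1} (-1)^{r+1} · U_{k-i}(cos(rπ/(k+2))) · sin²(rπ/(k+2)) · (2·cos(rπ/(k+2)))^j. -/

import Mathlib

open Real Polynomial Polynomial.Chebyshev Finset

/-- Number of directed paths from `(0,0)` to `(j,i)` in the Bratteli diagram for `SU(2)_k`. -/
def bratteliD (k : ℕ) : ℕ → ℕ → ℕ
  | i, 0 => if i = 0 then 1 else 0
  | i, j + 1 =>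
      if i ≤ k then
        (if 1 ≤ i then bratteliD k (i - 1) j else 0) +
        (if i + 1 ≤ k then bratteliD k (i + 1) j else 0)
      else 0

-- telescoping cosine sum
lemma tel (φ : ℝ) (n : ℕ) :
    2 * Real.sin (φ/2) * ∑ r ∈ Finset.range n, Real.cos ((r+1)*φ)
      = Real.sin ((n + 1/2)*φ) - Real.sin (φ/2) := by
  induction n with
  | zero => simp; ring_nf
  | succ n ih =>
    rw [Finset.sum_range_succ, mul_add, ih]
    have h := Real.sin_sub_sin ((n+1+1/2)*φ) ((n+1/2)*φ)
    have e1 : ((n+1+1/2)*φ - (n+1/2)*φ)/2 = φ/2 := by ring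
    have e2 : ((n+1+1/2)*φ + (n+1/2)*φ)/2 = (↑n+1)*φ := by push_cast; ring
    rw [e1, e2] at h
    push_cast
    push_cast at h
    linarith [h]

lemma cosSum (k c : ℕ) (hc0 : 0 < c) (hc : c < 2*(k+2)) :
    ∑ r ∈ Finset.Icc 1 (k+1), Real.cos (c * (r * π / (k+2)))
      = if Even c then -1 else 0 := by
  set N : ℝ := (k:ℝ) + 2 with hN
  have hNpos : (0:ℝ) < N := by positivity
  set φ : ℝ := c * π / N with hφ
  have hs : Real.sin (φ/2) > 0 := by
    apply Real.sin_pos_of_pos_of_lt_pi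
    · rw [hφ]; positivity
    · rw [hφ, div_div, div_lt_iff₀ (by positivity)]
      have h1 : (c:ℝ) < N * 2 := by
        rw [hN]; push_cast
        calc (c:ℝ) < 2*(k+2) := by exact_mod_cast hc
        _ = ((k:ℝ)+2)*2 := by ring
      nlinarith [Real.pi_pos]
  -- rewrite sum over Icc as range
  have hsum : ∑ r ∈ Finset.Icc 1 (k+1), Real.cos (c * (r * π / N))
      = ∑ r ∈ Finset.range (k+1), Real.cos ((r+1)*φ) := by
    have : Finset.Icc 1 (k+1) = Finset.Ico 1 (k+2) := by
      rfl
    rw [this, Finset.sum_Ico_eq_sum_range]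
    have h2 : k + 2 - 1 = k + 1 := rfl
    rw [h2]
    apply Finset.sum_congr rfl
    intro r _
    congr 1
    push_cast [hφ]
    ring
  rw [hsum]
  have htel := tel φ (k+1)
  -- sin ((k+1+1/2)*φ) = sin (c*π - φ/2)
  have hend : ((k+1:ℕ) + 1/2 : ℝ)*φ = (c:ℝ)*π - φ/2 := by
    rw [hφ]
    field_simp
    push_cast [hN]
    ring
  rw [hend, Real.sin_nat_mul_pi_sub] at htel
  rcases Nat.even_or_odd c with he | ho
  · rw [he.neg_one_pow] at htel
    simp only [he, if_pos]
    have : 2 * Real.sin (φ/2) * ∑ r ∈ Finset.range (k+1), Real.cos ((r+1)*φ)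
        = 2 * Real.sin (φ/2) * (-1) := by rw [htel]; ring
    exact mul_left_cancel₀ (by positivity) this
  · rw [ho.neg_one_pow] at htel
    rw [if_neg (Nat.not_even_iff_odd.2 ho)]
    have h2 : 2 * Real.sin (φ/2) * ∑ r ∈ Finset.range (k+1), Real.cos ((r+1)*φ)
        = 2 * Real.sin (φ/2) * 0 := by rw [htel]; ring
    exact mul_left_cancel₀ (by positivity) h2

noncomputable def Saux (k : ℕ) (m : ℤ) (j : ℕ) : ℝ :=
  ∑ r ∈ Finset.Icc 1 (k+1), (-1:ℝ)^(r+1) * Real.sin (m * (r * π / (k+2)))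
    * Real.sin (r * π / (k+2)) * (2 * Real.cos (r * π / (k+2)))^j

lemma Saux_zero (k j : ℕ) : Saux k 0 j = 0 := by simp [Saux]

lemma Saux_top (k j : ℕ) : Saux k ((k:ℤ)+2) j = 0 := by
  unfold Saux
  apply Finset.sum_eq_zero
  intro r hr
  have h : (((k:ℤ)+2 : ℤ) : ℝ) * ((r:ℝ) * π / ((k:ℝ)+2)) = (r:ℝ) * π := by
    push_cast
    field_simp
  rw [h, Real.sin_nat_mul_pi]
  ring

lemma Saux_rec (k : ℕ) (m : ℤ) (j : ℕ) :
    Saux k m (j+1) = Saux k (m+1) j + Saux k (m-1) j := by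
  unfold Saux
  rw [← Finset.sum_add_distrib]
  apply Finset.sum_congr rfl
  intro r _
  set θ : ℝ := (r:ℝ) * π / ((k:ℝ)+2) with hθ
  have key : Real.sin (((m:ℝ)+1) * θ) + Real.sin (((m:ℝ)-1) * θ)
      = 2 * Real.sin ((m:ℝ) * θ) * Real.cos θ := by
    rw [add_mul, sub_mul, one_mul, Real.sin_add, Real.sin_sub]
    ring
  push_cast
  rw [pow_succ]
  linear_combination ((-1:ℝ)^r * Real.sin θ * (2 * Real.cos θ)^j) * key

lemma Saux_base (k i : ℕ) (hik : i ≤ k) :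
    Saux k ((k:ℤ) - i + 1) 0 = if i = 0 then ((k:ℝ)+2)/2 else 0 := by
  have key : Saux k ((k:ℤ) - i + 1) 0
      = (∑ r ∈ Finset.Icc 1 (k+1), Real.cos ((i:ℝ) * ((r:ℝ) * π / ((k:ℝ)+2)))
        - ∑ r ∈ Finset.Icc 1 (k+1),
            Real.cos (((2*k+2-i:ℕ):ℝ) * ((r:ℝ) * π / ((k:ℝ)+2)))) / 2 := by
    unfold Saux
    rw [← Finset.sum_sub_distrib, Finset.sum_div]
    apply Finset.sum_congr rfl
    intro r hr
    set θ : ℝ := (r:ℝ) * π / ((k:ℝ)+2) with hθ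
    have hk1 : Real.sin (((k:ℝ)+1)*θ) = (-1:ℝ)^(r+1) * Real.sin θ := by
      have h1 : ((k:ℝ)+1)*θ = (r:ℝ)*π - θ := by
        rw [hθ]; field_simp; ring
      rw [h1, Real.sin_nat_mul_pi_sub]
      ring
    have c1 : (((2*k+2-i:ℕ)):ℝ) = 2*(k:ℝ)+2-(i:ℝ) := by
      have : i ≤ 2*k+2 := by omega
      push_cast [Nat.cast_sub this]
      ring
    have h2 : Real.cos ((i:ℝ)*θ) - Real.cos (((2*k+2-i:ℕ):ℝ)*θ)
        = 2 * Real.sin (((k:ℝ)-(i:ℝ)+1)*θ) * Real.sin (((k:ℝ)+1)*θ) := by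
      rw [c1, Real.cos_sub_cos]
      have e1 : ((i:ℝ)*θ + (2*(k:ℝ)+2-(i:ℝ))*θ)/2 = ((k:ℝ)+1)*θ := by ring
      have e2 : ((i:ℝ)*θ - (2*(k:ℝ)+2-(i:ℝ))*θ)/2 = -(((k:ℝ)-(i:ℝ)+1)*θ) := by ring
      rw [e1, e2, Real.sin_neg]
      ring
    rw [pow_zero]
    push_cast
    linear_combination (-1/2) * h2 - Real.sin (((k:ℝ)-(i:ℝ)+1)*θ) * hk1
  rw [key]
  by_cases h0 : i = 0
  · subst h0
    rw [if_pos rfl]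
    have hB := cosSum k (2*k+2-0) (by omega) (by omega)
    have hBe : Even (2*k+2-0) := ⟨k+1, by omega⟩
    rw [if_pos hBe] at hB
    rw [hB]
    have hA : ∑ r ∈ Finset.Icc 1 (k+1), Real.cos ((((0:ℕ)):ℝ) * ((r:ℝ) * π / ((k:ℝ)+2)))
        = (k+1 : ℝ) := by
      rw [Finset.sum_congr rfl (fun r _ => by
        rw [Nat.cast_zero, zero_mul, Real.cos_zero] : ∀ r ∈ Finset.Icc 1 (k+1),
          Real.cos ((((0:ℕ)):ℝ) * ((r:ℝ) * π / ((k:ℝ)+2))) = (1:ℝ))]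
      simp [Nat.card_Icc]
    rw [hA]
    ring
  · rw [if_neg h0]
    have hA := cosSum k i (by omega) (by omega)
    have hB := cosSum k (2*k+2-i) (by omega) (by omega)
    have hpar : Even (2*k+2-i) ↔ Even i := by
      rw [Nat.even_sub (by omega : i ≤ 2*k+2)]
      simp [Nat.even_add, parity_simps]
    rw [hA, hB]
    by_cases he : Even i
    · rw [if_pos he, if_pos (hpar.2 he)]; ring
    · rw [if_neg he, if_neg (fun h => he (hpar.1 h))]; ring

lemma mainAux (k : ℕ) : ∀ j i, i ≤ k →
    (bratteliD k i j : ℝ) = 2/((k:ℝ)+2) * Saux k ((k:ℤ)-i+1) j := by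
  intro j
  induction j with
  | zero =>
    intro i hik
    rw [Saux_base k i hik]
    by_cases h0 : i = 0
    · subst h0
      rw [if_pos rfl]
      show ((bratteliD k 0 0 : ℕ) : ℝ) = _
      rw [show bratteliD k 0 0 = 1 from rfl]
      push_cast
      field_simp
    · rw [if_neg h0]
      rw [show bratteliD k i 0 = 0 from by simp [bratteliD, h0]]
      simp
  | succ j ih =>
    intro i hik
    rw [show bratteliD k i (j+1)
        = (if 1 ≤ i then bratteliD k (i-1) j else 0)
          + (if i+1 ≤ k then bratteliD k (i+1) j else 0) from by
      simp [bratteliD, hik]]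
    rw [Nat.cast_add]
    have t1 : ((if 1 ≤ i then bratteliD k (i-1) j else 0 : ℕ) : ℝ)
        = 2/((k:ℝ)+2) * Saux k ((k:ℤ)-i+1+1) j := by
      by_cases h1 : 1 ≤ i
      · rw [if_pos h1, ih (i-1) (le_trans (Nat.sub_le i 1) hik)]
        congr 2
        push_cast [Nat.cast_sub h1]
        ring
      · rw [if_neg h1]
        have h0 : i = 0 := by omega
        subst h0
        rw [show (k:ℤ)-(0:ℕ)+1+1 = (k:ℤ)+2 from by push_cast; ring, Saux_top]
        simp
    have t2 : ((if i+1 ≤ k then bratteliD k (i+1) j else 0 : ℕ) : ℝ)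
        = 2/((k:ℝ)+2) * Saux k ((k:ℤ)-i+1-1) j := by
      by_cases h1 : i+1 ≤ k
      · rw [if_pos h1, ih (i+1) h1]
        congr 2
        push_cast
        ring
      · rw [if_neg h1]
        have h0 : i = k := by omega
        rw [h0, show (k:ℤ)-(k:ℕ)+1-1 = (0:ℤ) from by push_cast; ring, Saux_zero]
        simp
    rw [t1, t2, Saux_rec]
    ring

theorem bratteliD_explicit_formula (k i j : ℕ) (hik : i ≤ k) :
    (bratteliD k i j : ℝ) =
      (2 / (k + 2)) * ∑ r ∈ Finset.Icc 1 (k + 1),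
        (-1) ^ (r + 1) * (Chebyshev.U ℝ ((k : ℤ) - i)).eval (Real.cos (r * π / (k + 2))) *
          (Real.sin (r * π / (k + 2))) ^ 2 * (2 * Real.cos (r * π / (k + 2))) ^ j := by
  rw [mainAux k j i hik]
  congr 1
  unfold Saux
  apply Finset.sum_congr rfl
  intro r hr
  set θ : ℝ := (r:ℝ) * π / ((k:ℝ)+2) with hθ
  have hU := Polynomial.Chebyshev.U_real_cos θ ((k:ℤ) - i)
  push_cast at hU ⊢
  rw [pow_two]
  linear_combination ((-1:ℝ)^r * Real.sin θ * (2*Real.cos θ)^j) * hU
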